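/- The sets Φ_k for distinct k ≥ 1 are pairwise disjoint, where Φ_k = { 2^r · (q + (2k-1) · 2^{L(q)}) : r ≥ 0, q an odd fibbinary number }. -/

import Mathlib

/-- A natural number is fibbinary if its binary representation has no two consecutive 1 bits. -/
def Fibbinary (m : ℕ) : Prop := ∀ i : ℕ, ¬(m.testBit i ∧ m.testBit (i + 1))

def Phi (k : ℕ) : Set ℕ :=
  {m : ℕ | ∃ r q : ℕ, Odd q ∧ Fibbinary q ∧
    m = 2 ^ r * (q + (2 * k - 1) * 2 ^ Nat.size q)}

lemma testBit_n_lt (q c i : ℕ) (hi : i < q.size) :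
    (q + c * 2 ^ q.size).testBit i = q.testBit i := by
  have h1 : (q + c * 2 ^ q.size) % 2 ^ q.size = q := by
    rw [Nat.add_mul_mod_self_right, Nat.mod_eq_of_lt (Nat.lt_size_self q)]
  have := Nat.testBit_mod_two_pow (q + c * 2 ^ q.size) q.size i
  rw [h1] at this
  simp [hi] at this
  exact this.symm

lemma testBit_top (q c : ℕ) (hc : Odd c) : (q + c * 2 ^ q.size).testBit q.size = true := by
  have hdiv : (q + c * 2 ^ q.size) / 2 ^ q.size = c := by
    rw [Nat.add_mul_div_right _ _ (Nat.pow_pos (by norm_num)),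
      Nat.div_eq_of_lt (Nat.lt_size_self q), Nat.zero_add]
  rw [Nat.testBit_eq_decide_div_mod_eq, hdiv]
  simpa [Nat.odd_iff] using hc

lemma testBit_size_sub_one (q : ℕ) (hq : 0 < q) : q.testBit (q.size - 1) = true := by
  have hs : 0 < q.size := Nat.size_pos.2 hq
  have h1 : 2 ^ (q.size - 1) ≤ q := by
    rw [← Nat.lt_size]; omega
  have h2 : q < 2 ^ (q.size - 1 + 1) := by
    have := Nat.lt_size_self q
    have : q.size - 1 + 1 = q.size := by omega
    rw [this]; exact Nat.lt_size_self q
  rw [Nat.testBit_eq_decide_div_mod_eq]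
  have : q / 2 ^ (q.size - 1) = 1 := by
    apply Nat.div_eq_of_lt_le (by simpa using h1)
    rw [pow_succ] at h2; omega
  simp [this]

lemma uniq (k₁ k₂ q₁ q₂ : ℕ) (hk₁ : 1 ≤ k₁) (hk₂ : 1 ≤ k₂)
    (hq₁ : Odd q₁) (hq₂ : Odd q₂) (hf₁ : Fibbinary q₁) (hf₂ : Fibbinary q₂)
    (heq : q₁ + (2 * k₁ - 1) * 2 ^ q₁.size = q₂ + (2 * k₂ - 1) * 2 ^ q₂.size) :
    k₁ = k₂ := by
  have hpos₁ : 0 < q₁ := hq₁.pos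
  have hpos₂ : 0 < q₂ := hq₂.pos
  have hs₁ : 0 < q₁.size := Nat.size_pos.2 hpos₁
  have hs₂ : 0 < q₂.size := Nat.size_pos.2 hpos₂
  have hodd₁ : Odd (2 * k₁ - 1) := by refine ⟨k₁ - 1, ?_⟩; omega
  have hodd₂ : Odd (2 * k₂ - 1) := by refine ⟨k₂ - 1, ?_⟩; omega
  -- first show sizes are equal
  have hsize : q₁.size = q₂.size := by
    by_contra hne
    -- wlog: handle both orders symmetrically
    rcases Nat.lt_or_ge q₁.size q₂.size with hlt | hge
    · -- bits q₁.size - 1 and q₁.size of n are bits of q₂, contradiction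
      have hb1 : q₂.testBit (q₁.size - 1) = true := by
        rw [← testBit_n_lt q₂ (2 * k₂ - 1) _ (by omega), ← heq,
          testBit_n_lt q₁ (2 * k₁ - 1) _ (by omega)]
        exact testBit_size_sub_one q₁ hpos₁
      have hb2 : q₂.testBit q₁.size = true := by
        rw [← testBit_n_lt q₂ (2 * k₂ - 1) _ hlt, ← heq]
        exact testBit_top q₁ _ hodd₁
      exact hf₂ (q₁.size - 1) ⟨hb1, by rwa [Nat.sub_add_cancel hs₁]⟩
    · have hlt : q₂.size < q₁.size := by omega
      have hb1 : q₁.testBit (q₂.size - 1) = true := by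
        rw [← testBit_n_lt q₁ (2 * k₁ - 1) _ (by omega), heq,
          testBit_n_lt q₂ (2 * k₂ - 1) _ (by omega)]
        exact testBit_size_sub_one q₂ hpos₂
      have hb2 : q₁.testBit q₂.size = true := by
        rw [← testBit_n_lt q₁ (2 * k₁ - 1) _ hlt, heq]
        exact testBit_top q₂ _ hodd₂
      exact hf₁ (q₂.size - 1) ⟨hb1, by rwa [Nat.sub_add_cancel hs₂]⟩
  -- then q₁ = q₂ by taking mod
  rw [hsize] at heq
  have hq : q₁ = q₂ := by
    have := congrArg (· % 2 ^ q₂.size) heq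
    have l₁ : q₁ < 2 ^ q₂.size := hsize ▸ Nat.lt_size_self q₁
    simpa [Nat.add_mul_mod_self_right, Nat.mod_eq_of_lt l₁,
      Nat.mod_eq_of_lt (Nat.lt_size_self q₂)] using this
  rw [hq] at heq
  have hp : 0 < 2 ^ q₂.size := Nat.pow_pos (by norm_num)
  have hc : (2*k₁-1) * 2^q₂.size = (2*k₂-1) * 2^q₂.size := by omega
  have := Nat.eq_of_mul_eq_mul_right hp hc
  omega

lemma odd_eq_of_eq_two_pow_mul (d n₁ n₂ : ℕ) (h₁ : Odd n₁) (h : n₁ = 2 ^ d * n₂) :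
    n₁ = n₂ := by
  cases d with
  | zero => simpa using h
  | succ e =>
    exfalso
    have hdvd : 2 ∣ n₁ := ⟨2 ^ e * n₂, by rw [h, pow_succ]; ring⟩
    rcases h₁ with ⟨m, hm⟩
    omega

lemma odd_cancel_pow (r₁ r₂ n₁ n₂ : ℕ) (h₁ : Odd n₁) (h₂ : Odd n₂)
    (heq : 2 ^ r₁ * n₁ = 2 ^ r₂ * n₂) : n₁ = n₂ := by
  rcases le_total r₁ r₂ with hle | hle
  · have hr : r₂ = r₁ + (r₂ - r₁) := by omega
    rw [hr, pow_add, mul_assoc] at heq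
    have := Nat.eq_of_mul_eq_mul_left (Nat.pow_pos (n := r₁) (by norm_num)) heq
    exact odd_eq_of_eq_two_pow_mul _ _ _ h₁ this
  · have hr : r₁ = r₂ + (r₁ - r₂) := by omega
    rw [hr, pow_add, mul_assoc] at heq
    have := Nat.eq_of_mul_eq_mul_left (Nat.pow_pos (n := r₂) (by norm_num)) heq.symm
    exact (odd_eq_of_eq_two_pow_mul _ _ _ h₂ this).symm

theorem phi_pairwise_disjoint (k₁ k₂ : ℕ) (hk₁ : 1 ≤ k₁) (hk₂ : 1 ≤ k₂) (h : k₁ ≠ k₂) :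
    Disjoint (Phi k₁) (Phi k₂) := by
  rw [Set.disjoint_left]
  rintro m ⟨r₁, q₁, hq₁, hf₁, hm₁⟩ ⟨r₂, q₂, hq₂, hf₂, hm₂⟩
  have hodd₁ : Odd (q₁ + (2 * k₁ - 1) * 2 ^ q₁.size) := by
    have hsp := Nat.size_pos.2 hq₁.pos
    rcases hq₁ with ⟨a, ha⟩
    have : Even ((2 * k₁ - 1) * 2 ^ q₁.size) := by
      apply Even.mul_left
      exact (Nat.even_pow' (by omega)).2 even_two
    rcases this with ⟨b, hb⟩
    exact ⟨a + b, by omega⟩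
  have hodd₂ : Odd (q₂ + (2 * k₂ - 1) * 2 ^ q₂.size) := by
    have hsp := Nat.size_pos.2 hq₂.pos
    rcases hq₂ with ⟨a, ha⟩
    have : Even ((2 * k₂ - 1) * 2 ^ q₂.size) := by
      apply Even.mul_left
      exact (Nat.even_pow' (by omega)).2 even_two
    rcases this with ⟨b, hb⟩
    exact ⟨a + b, by omega⟩
  have := odd_cancel_pow r₁ r₂ _ _ hodd₁ hodd₂ (hm₁ ▸ hm₂ ▸ rfl)
  exact h (uniq k₁ k₂ q₁ q₂ hk₁ hk₂ hq₁ hq₂ hf₁ hf₂ this)
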